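/- arXiv:1709.00198 — 3 statements merged into one kernel-verified Lean document; each statement's English description precedes it below -/
import Mathlib

section
/- For every integer n ≥ 2 and every real number x with 0 ≤ x ≤ n − 1, one has ((n−1)/n)^(n−x) − x/n ≥ 0 (equivalently, ((n−1)/n)^(n−x) ≥ x/n), where the power is the real power with base (n−1)/n. -/
/-- For every integer `n ≥ 2` and every real `x` with `0 ≤ x ≤ n - 1`,
`((n-1)/n) ^ (n - x) - x/n ≥ 0`, where the power is the real power. -/
theorem stmt_0 (n : ℕ) (hn : 2 ≤ n) (x : ℝ) (hx0 : 0 ≤ x) (hx1 : x ≤ (n : ℝ) - 1) :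
    (((n : ℝ) - 1) / n) ^ ((n : ℝ) - x) - x / n ≥ 0 := by
  have hn2 : (2 : ℝ) ≤ n := by exact_mod_cast hn
  have hnpos : (0 : ℝ) < n := by linarith
  have hs : (-1 : ℝ) ≤ -(1 / n) := by
    rw [neg_le_neg_iff]
    rw [div_le_one hnpos]; linarith
  have hp : (1 : ℝ) ≤ (n : ℝ) - x := by linarith
  have key := one_add_mul_self_le_rpow_one_add hs hp
  have h1 : (1 : ℝ) + -(1 / n) = ((n : ℝ) - 1) / n := by field_simp; ring
  rw [h1] at key
  have h2 : (1 : ℝ) + ((n : ℝ) - x) * -(1 / n) = x / n := by field_simp; ring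
  rw [h2] at key
  linarith
end

section
/- Let n ≥ 1 and f ≥ 1 be integers and let u be an integer with 0 ≤ u ≤ n. Then u·(u/n)^f ≤ u·(1 − 1/n)^(f·(n−u)), where both sides are real numbers. In words: if u of the n processes are uninformed, the expected number of processes still uninformed after one round of the regular pull algorithm with fan-in f (each uninformed process choosing f targets independently and uniformly at random from the n processes) is at most the expected number still uninformed after one round of the regular push algorithm with fan-out f (each of the n−u informed processes choosing f targets independently and uniformly at random). -/
/-- One round of the regular pull algorithm with fan-in `f` leaves, in expectation,
at most as many uninformed processes as one round of the regular push algorithm with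
fan-out `f`: `u·(u/n)^f ≤ u·(1 - 1/n)^(f·(n-u))`. -/
theorem stmt_1 (n f u : ℕ) (hn : 1 ≤ n) (hf : 1 ≤ f) (hu : u ≤ n) :
    (u : ℝ) * ((u : ℝ) / n) ^ f ≤ (u : ℝ) * (1 - 1 / (n : ℝ)) ^ (f * (n - u)) := by
  have hn0 : (0:ℝ) < n := by exact_mod_cast hn
  apply mul_le_mul_of_nonneg_left _ (by positivity)
  have hber : (u : ℝ) / n ≤ (1 - 1 / (n : ℝ)) ^ (n - u) := by
    have h := one_add_mul_le_pow (a := -(1 / (n:ℝ))) (by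
      have : (1:ℝ)/n ≤ 1 := by
        rw [div_le_one hn0]; exact_mod_cast hn
      linarith) (n - u)
    have hc : (u : ℝ) / n ≤ 1 + (n - u : ℕ) * -(1 / (n:ℝ)) := by
      have hcast : ((n - u : ℕ) : ℝ) = (n : ℝ) - u := by
        push_cast [Nat.cast_sub hu]; ring
      rw [hcast]
      field_simp
      linarith
    calc (u : ℝ) / n ≤ 1 + (n - u : ℕ) * -(1 / (n:ℝ)) := hc
      _ ≤ (1 + -(1/(n:ℝ))) ^ (n - u) := h
      _ = (1 - 1/(n:ℝ)) ^ (n - u) := by ring_nf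
  calc ((u:ℝ)/n) ^ f ≤ ((1 - 1/(n:ℝ)) ^ (n - u)) ^ f := by
        apply pow_le_pow_left₀ (by positivity) hber
    _ = (1 - 1/(n:ℝ)) ^ (f * (n - u)) := by rw [← pow_mul, Nat.mul_comm]
end

section
/- For every integer n ≥ 2, the function g(x) = ((n−1)/n)^(n−x) − x/n (real power) is nonincreasing (antitone) on the real interval [0, n−1]. -/
/-- For every integer `n ≥ 2`, the function `g(x) = ((n-1)/n)^(n-x) - x/n` (real power)
is nonincreasing on the interval `[0, n-1]`. -/
theorem stmt_2 (n : ℕ) (hn : 2 ≤ n) :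
    AntitoneOn (fun x : ℝ => (((n : ℝ) - 1) / n) ^ ((n : ℝ) - x) - x / n)
      (Set.Icc (0 : ℝ) ((n : ℝ) - 1)) := by
  have hn2 : (2 : ℝ) ≤ (n : ℝ) := by exact_mod_cast hn
  have hnpos : (0 : ℝ) < n := by linarith
  have hn1 : (0 : ℝ) < (n : ℝ) - 1 := by linarith
  set r : ℝ := ((n : ℝ) - 1) / n with hrdef
  have hr0 : 0 < r := div_pos hn1 hnpos
  have hr1 : r < 1 := by
    rw [hrdef, div_lt_one hnpos]; linarith
  set L : ℝ := Real.log r with hLdef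
  have hL0 : L < 0 := Real.log_neg hr0 hr1
  have hLb : -L ≤ 1 / ((n : ℝ) - 1) := by
    have h1 : Real.log r⁻¹ ≤ r⁻¹ - 1 :=
      Real.log_le_sub_one_of_pos (inv_pos.mpr hr0)
    rw [Real.log_inv] at h1
    have h2 : r⁻¹ - 1 = 1 / ((n : ℝ) - 1) := by
      rw [hrdef]; field_simp; ring
    linarith
  have hfun : (fun x : ℝ => (((n : ℝ) - 1) / n) ^ ((n : ℝ) - x) - x / n)
      = fun x : ℝ => Real.exp (L * ((n : ℝ) - x)) - x / n := by
    funext x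
    rw [← hrdef, Real.rpow_def_of_pos hr0, hLdef]
  rw [hfun]
  have hd : ∀ x : ℝ, HasDerivAt (fun x : ℝ => Real.exp (L * ((n : ℝ) - x)) - x / n)
      (Real.exp (L * ((n : ℝ) - x)) * (-L) - 1 / n) x := by
    intro x
    have h1 : HasDerivAt (fun x : ℝ => (n : ℝ) - x) (-1) x := by
      simpa using (hasDerivAt_id x).const_sub (n : ℝ)
    have h2 : HasDerivAt (fun x : ℝ => L * ((n : ℝ) - x)) (L * (-1)) x := h1.const_mul L
    have h3 := h2.exp
    have h4 : HasDerivAt (fun x : ℝ => x / n) (1 / n) x := by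
      simpa using (hasDerivAt_id x).div_const (n : ℝ)
    exact (h3.sub h4).congr_deriv (by ring)
  apply antitoneOn_of_deriv_nonpos (convex_Icc _ _)
  · exact Continuous.continuousOn (by fun_prop)
  · intro x hx
    exact (hd x).differentiableAt.differentiableWithinAt
  · intro x hx
    rw [interior_Icc] at hx
    rw [(hd x).deriv]
    have hx1 : (1 : ℝ) ≤ (n : ℝ) - x := by
      have := hx.2; linarith
    have hexp : Real.exp (L * ((n : ℝ) - x)) ≤ r := by
      have : L * ((n : ℝ) - x) ≤ L * 1 := by
        exact mul_le_mul_of_nonpos_left hx1 hL0.le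
      calc Real.exp (L * ((n : ℝ) - x)) ≤ Real.exp L := Real.exp_le_exp.mpr (by linarith)
        _ = r := Real.exp_log hr0
    have hmul : Real.exp (L * ((n : ℝ) - x)) * (-L) ≤ r * (1 / ((n : ℝ) - 1)) :=
      mul_le_mul hexp hLb (by linarith) hr0.le
    have : r * (1 / ((n : ℝ) - 1)) = 1 / n := by
      rw [hrdef]; field_simp
    linarith
end
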